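/- Let n ≥ 2 be an integer. For every tuple of positive integers (p₁, …, p_n) satisfying 2p₁ − p₂ ≥ 0, −p_{i−1} + 2p_i − p_{i+1} ≥ 0 for 2 ≤ i ≤ n−1, and −p_{n−1} + p_n ≥ 0, one has (1/(4n−2))·( 2Σ_{i=1}^{n−1} p_i² + p_n² − 2Σ_{i=1}^{n−1} p_i p_{i+1} + 2Σ_{i=1}^{n−1} p_i + p_n ) ≥ n/(2n−1), and equality holds for p₁ = … = p_n = 1. (Hence the first positive eigenvalue of the Laplacian of the full flag manifold SO(2n+1)/Tⁿ with the normal metric is μ₁ = n/(2n−1).) -/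

import Mathlib

open Finset

/-- Yamaguchi's eigenvalue `μ(P)` for the full flag manifold `SO(2n+1)/Tⁿ` with
the normal metric: for every dominant tuple of positive integers `p₁, …, p_n`
(i.e. `2p₁ - p₂ ≥ 0`, `-p_{i-1} + 2p_i - p_{i+1} ≥ 0` for `2 ≤ i ≤ n-1`, and
`-p_{n-1} + p_n ≥ 0`) one has
`(1/(4n-2))·(2Σ_{i<n} p_i² + p_n² - 2Σ_{i<n} p_i p_{i+1} + 2Σ_{i<n} p_i + p_n) ≥ n/(2n-1)`,
with equality for `p₁ = ⋯ = p_n = 1`.  Hence the first positive eigenvalue of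
the Laplacian of `SO(2n+1)/Tⁿ` is `μ₁ = n/(2n-1)`. -/

lemma key_int (p : ℕ → ℤ) : ∀ n : ℕ, 1 ≤ n → (∀ i, 1 ≤ i → i ≤ n → 1 ≤ p i) →
    2 * n ≤ 2 * ∑ i ∈ Finset.Icc 1 (n - 1), (p i) ^ 2 + (p n) ^ 2
      - 2 * ∑ i ∈ Finset.Icc 1 (n - 1), p i * p (i + 1)
      + 2 * ∑ i ∈ Finset.Icc 1 (n - 1), p i + p n := by
  intro n
  induction n with
  | zero => omega
  | succ m ih =>
    intro _ hp
    rcases Nat.eq_zero_or_pos m with hm | hm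
    · subst hm
      simp only [Nat.add_sub_cancel, Finset.Icc_self]
      have h1 := hp 1 le_rfl le_rfl
      simp
      nlinarith [h1]
    · have hm1 : 1 ≤ m := hm
      have ihm := ih hm1 (fun i h1 h2 => hp i h1 (h2.trans (Nat.le_succ m)))
      have hs : m + 1 - 1 = (m - 1) + 1 := by omega
      rw [hs]
      rw [Finset.sum_Icc_succ_top (by omega : 1 ≤ m - 1 + 1),
          Finset.sum_Icc_succ_top (by omega : 1 ≤ m - 1 + 1),
          Finset.sum_Icc_succ_top (by omega : 1 ≤ m - 1 + 1)]
      have he : m - 1 + 1 = m := by omega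
      rw [he]
      have h1 := hp m hm1 (Nat.le_succ m)
      have h2 := hp (m + 1) (by omega) le_rfl
      push_cast
      nlinarith [sq_nonneg (p m - p (m + 1)), ihm]


theorem SO_odd_first_eigenvalue (n : ℕ) (hn : 2 ≤ n) :
    (∀ p : ℕ → ℤ, (∀ i, 1 ≤ i → i ≤ n → 1 ≤ p i) →
      0 ≤ 2 * p 1 - p 2 →
      (∀ i, 2 ≤ i → i ≤ n - 1 → 0 ≤ -p (i - 1) + 2 * p i - p (i + 1)) →
      0 ≤ -p (n - 1) + p n →
      (n : ℝ) / (2 * n - 1) ≤ (1 / (4 * (n : ℝ) - 2)) *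
        (2 * ∑ i ∈ Finset.Icc 1 (n - 1), (p i : ℝ) ^ 2 + (p n : ℝ) ^ 2
          - 2 * ∑ i ∈ Finset.Icc 1 (n - 1), (p i : ℝ) * (p (i + 1) : ℝ)
          + 2 * ∑ i ∈ Finset.Icc 1 (n - 1), (p i : ℝ) + (p n : ℝ))) ∧
    (1 / (4 * (n : ℝ) - 2)) *
        (2 * ∑ _i ∈ Finset.Icc 1 (n - 1), (1 : ℝ) ^ 2 + (1 : ℝ) ^ 2
          - 2 * ∑ _i ∈ Finset.Icc 1 (n - 1), (1 : ℝ) * 1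
          + 2 * ∑ _i ∈ Finset.Icc 1 (n - 1), (1 : ℝ) + 1) = (n : ℝ) / (2 * n - 1) := by
  have hnR : (2 : ℝ) ≤ (n : ℝ) := by exact_mod_cast hn
  constructor
  · intro p hp _ _ _
    have key := key_int p n (by omega) hp
    have keyR : (2 : ℝ) * n ≤
        2 * ∑ i ∈ Finset.Icc 1 (n - 1), (p i : ℝ) ^ 2 + (p n : ℝ) ^ 2
          - 2 * ∑ i ∈ Finset.Icc 1 (n - 1), (p i : ℝ) * (p (i + 1) : ℝ)
          + 2 * ∑ i ∈ Finset.Icc 1 (n - 1), (p i : ℝ) + (p n : ℝ) := by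
      exact_mod_cast key
    rw [div_le_iff₀ (by linarith)]
    rw [mul_comm, ← mul_assoc]
    have h4 : (0 : ℝ) < 4 * (n : ℝ) - 2 := by linarith
    rw [mul_one_div, div_mul_eq_mul_div, le_div_iff₀ h4]
    nlinarith [keyR]
  · have hcard : ((n - 1 : ℕ) : ℝ) = (n : ℝ) - 1 := by
      have : (1 : ℕ) ≤ n := by omega
      push_cast [Nat.cast_sub this]
      ring
    simp only [Finset.sum_const, Nat.card_Icc, nsmul_eq_mul, one_pow, mul_one]
    have : (n - 1 + 1 - 1 : ℕ) = n - 1 := by omega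
    rw [this, hcard]
    have h4 : (4*(n:ℝ)-2) ≠ 0 := by linarith
    have h2 : (2*(n:ℝ)-1) ≠ 0 := by linarith
    field_simp
    rw [eq_div_iff (by linarith)]
    ring
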